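/- arXiv:2503.17967 — 3 statements merged into one kernel-verified Lean document; each statement's English description precedes it below -/
import Mathlib

section
/- Let K = ℚ(√(-D)) be an imaginary quadratic field with D > 3 squarefree and D ≡ 3 mod 4, and let p be a prime with (-D|p) = 1 (so p splits in O_K). Then the number of pairs (x,y) of positive integers with x² + D·y² = 4p equals 1 if p·O_K splits into principal prime ideals, and 0 otherwise. -/
open NumberField
open scoped nonZeroDivisors Classical

section Quad

variable {K : Type*} [Field K] [NumberField K] {D : ℕ} {θ : K}

local notation "e" => algebraMap ℚ K

lemma theta_not_rat (hD : 0 < D) (hθ : θ ^ 2 = -(D : K)) (q : ℚ) : e q ≠ θ := by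
  intro h
  have h2 : e (q ^ 2) = e (-(D : ℚ)) := by
    rw [map_pow, h, hθ]; push_cast; ring
  have h3 := (algebraMap ℚ K).injective h2
  nlinarith [sq_nonneg q, (by exact_mod_cast hD : (0:ℚ) < D)]

lemma lin_indep (hD : 0 < D) (hθ : θ ^ 2 = -(D : K)) :
    LinearIndependent ℚ ![(1 : K), θ] := by
  rw [linearIndependent_fin2]
  simp only [Matrix.cons_val_zero, Matrix.cons_val_one, Matrix.head_cons]
  refine ⟨?_, ?_⟩
  · intro h0
    rw [h0] at hθ
    have : ((D : ℚ) : K) = 0 := by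
      have := hθ.symm
      push_cast at this ⊢
      linear_combination -this
    have : (D : ℚ) = 0 := (algebraMap ℚ K).injective (by simpa using this)
    simp at this; omega
  · intro a h
    have ha : a ≠ 0 := by rintro rfl; simp at h
    apply theta_not_rat hD hθ a⁻¹
    have h2 : a⁻¹ • (a • θ) = a⁻¹ • (1 : K) := by rw [h]
    rw [smul_smul, inv_mul_cancel₀ ha, one_smul] at h2
    rw [Algebra.algebraMap_eq_smul_one, h2]

end Quad

section Quad2

variable {K : Type*} [Field K] [NumberField K] {D : ℕ} {θ : K}

local notation "e" => algebraMap ℚ K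

variable (hD : 0 < D) (hθ : θ ^ 2 = -(D : K)) (hrank : Module.finrank ℚ K = 2)

include hD hθ hrank

noncomputable def qBasis : Module.Basis (Fin 2) ℚ K :=
  basisOfLinearIndependentOfCardEqFinrank (lin_indep hD hθ) (by simp [hrank])

lemma qBasis_coe : ⇑(qBasis hD hθ hrank) = ![(1 : K), θ] :=
  coe_basisOfLinearIndependentOfCardEqFinrank _ _

lemma qBasis_repr (a b : ℚ) (j : Fin 2) :
    (qBasis hD hθ hrank).repr (e a + e b * θ) j = ![a, b] j := by
  set B := qBasis hD hθ hrank with hB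
  have h0 : B 0 = 1 := by rw [qBasis_coe]; rfl
  have h1 : B 1 = θ := by rw [qBasis_coe]; rfl
  have : e a + e b * θ = a • B 0 + b • B 1 := by
    simp [h0, h1, Algebra.smul_def]
  rw [this, map_add, map_smul, map_smul, B.repr_self, B.repr_self]
  fin_cases j <;> simp

lemma norm_formula (a b : ℚ) :
    Algebra.norm ℚ (e a + e b * θ) = a ^ 2 + D * b ^ 2 := by
  set B := qBasis hD hθ hrank with hB
  have h0 : B 0 = 1 := by rw [qBasis_coe]; rfl
  have h1 : B 1 = θ := by rw [qBasis_coe]; rfl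
  have hm1 : (e a + e b * θ) * B 0 = e a + e b * θ := by rw [h0, mul_one]
  have hm2 : (e a + e b * θ) * B 1 = e (-(D * b)) + e a * θ := by
    rw [h1]
    have expand : (e a + e b * θ) * θ = e a * θ + e b * θ ^ 2 := by ring
    rw [expand, hθ]
    simp only [map_neg, map_mul, map_natCast]
    ring
  rw [Algebra.norm_eq_matrix_det B, Matrix.det_fin_two]
  simp only [Algebra.leftMulMatrix_eq_repr_mul, hm1, hm2, qBasis_repr hD hθ hrank]
  rw [qBasis_repr hD hθ hrank, qBasis_repr hD hθ hrank, qBasis_repr hD hθ hrank, qBasis_repr hD hθ hrank]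
  simp
  ring

lemma trace_formula (a b : ℚ) :
    Algebra.trace ℚ K (e a + e b * θ) = 2 * a := by
  set B := qBasis hD hθ hrank with hB
  have h0 : B 0 = 1 := by rw [qBasis_coe]; rfl
  have h1 : B 1 = θ := by rw [qBasis_coe]; rfl
  have hm1 : (e a + e b * θ) * B 0 = e a + e b * θ := by rw [h0, mul_one]
  have hm2 : (e a + e b * θ) * B 1 = e (-(D * b)) + e a * θ := by
    rw [h1]
    have expand : (e a + e b * θ) * θ = e a * θ + e b * θ ^ 2 := by ring
    rw [expand, hθ]
    simp only [map_neg, map_mul, map_natCast]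
    ring
  rw [Algebra.trace_eq_matrix_trace B, Matrix.trace_fin_two]
  simp only [Algebra.leftMulMatrix_eq_repr_mul, hm1, hm2, qBasis_repr hD hθ hrank]
  rw [qBasis_repr hD hθ hrank, qBasis_repr hD hθ hrank]
  simp
  ring

lemma exists_coords (α : K) : ∃ a b : ℚ, α = e a + e b * θ := by
  set B := qBasis hD hθ hrank with hB
  have h0 : B 0 = 1 := by rw [qBasis_coe]; rfl
  have h1 : B 1 = θ := by rw [qBasis_coe]; rfl
  refine ⟨B.repr α 0, B.repr α 1, ?_⟩
  have := B.sum_repr α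
  rw [Fin.sum_univ_two, h0, h1] at this
  conv_lhs => rw [← this]
  rw [Algebra.smul_def, Algebra.smul_def, mul_one]

lemma coords_unique {a b c d : ℚ} (h : e a + e b * θ = e c + e d * θ) :
    a = c ∧ b = d := by
  have hbd : b = d := by
    by_contra hbd
    apply theta_not_rat hD hθ ((c - a) / (b - d))
    have hsub : e (b - d) * θ = e (c - a) := by
      simp only [map_sub]; linear_combination h
    have hne : (b - d) ≠ 0 := sub_ne_zero.mpr hbd
    have hEne : e (b - d) ≠ 0 := fun h0 =>
      hne ((algebraMap ℚ K).injective (by simpa using h0))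
    rw [map_div₀, div_eq_iff hEne]
    linear_combination -hsub
  refine ⟨?_, hbd⟩
  subst hbd
  have : e a = e c := by linear_combination h
  exact (algebraMap ℚ K).injective this

end Quad2

lemma parity_lemma {D : ℕ} (hDmod : D % 4 = 3) (t s n : ℤ)
    (h : t ^ 2 + (D : ℤ) * s ^ 2 = 4 * n) : t % 2 = s % 2 := by
  rcases Int.even_or_odd t with ⟨k, hk⟩ | ⟨k, hk⟩ <;>
    rcases Int.even_or_odd s with ⟨l, hl⟩ | ⟨l, hl⟩
  · omega
  · exfalso
    have h4 : (4 : ℤ) ∣ (D : ℤ) := ⟨n - k * k - (D : ℤ) * l * l - (D : ℤ) * l, by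
      subst hk hl; linear_combination h⟩
    have : (4 : ℕ) ∣ D := by exact_mod_cast h4
    omega
  · exfalso
    have h4 : (4 : ℤ) ∣ 1 := ⟨n - k * k - k - (D : ℤ) * l * l, by
      subst hk hl; linear_combination h⟩
    omega
  · omega

section Quad3

variable {K : Type*} [Field K] [NumberField K] {D : ℕ} {θ : K}

local notation "e" => algebraMap ℚ K

lemma omega_int (hDmod : D % 4 = 3) (hθ : θ ^ 2 = -(D : K)) :
    IsIntegral ℤ ((1 + θ) / 2) := by
  set c : ℤ := (((D + 1) / 4 : ℕ) : ℤ) with hc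
  refine ⟨Polynomial.X ^ 2 - Polynomial.X + Polynomial.C c, ?_, ?_⟩
  · apply Polynomial.Monic.add_of_left
    · apply Polynomial.Monic.sub_of_left (Polynomial.monic_X_pow 2)
      calc Polynomial.X.degree ≤ 1 := Polynomial.degree_X_le
        _ < (2:ℕ) := by norm_num
        _ = (Polynomial.X ^ 2 : Polynomial ℤ).degree := (Polynomial.degree_X_pow 2).symm
    · have hlt : (Polynomial.X : Polynomial ℤ).degree
          < (Polynomial.X ^ 2 : Polynomial ℤ).degree := by
        rw [Polynomial.degree_X_pow]
        exact lt_of_le_of_lt Polynomial.degree_X_le (by norm_num)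
      calc (Polynomial.C c).degree ≤ 0 := Polynomial.degree_C_le
        _ < (2:ℕ) := by norm_num
        _ = (Polynomial.X ^ 2 - Polynomial.X : Polynomial ℤ).degree := by
            rw [Polynomial.degree_sub_eq_left_of_degree_lt hlt, Polynomial.degree_X_pow]
  · have h4 : c * 4 = (D : ℤ) + 1 := by
      have h1 : (D + 1) / 4 * 4 = D + 1 := Nat.div_mul_cancel (by omega)
      rw [hc]; exact_mod_cast h1
    have h4K : ((c : K)) * 4 = (D : K) + 1 := by exact_mod_cast congrArg (fun z : ℤ => (z : K)) h4
    simp only [Polynomial.eval₂_add, Polynomial.eval₂_sub, Polynomial.eval₂_pow,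
      Polynomial.eval₂_X, Polynomial.eval₂_C]
    rw [eq_intCast (algebraMap ℤ K) c]
    linear_combination ((1:K)/4) * hθ + ((1:K)/4) * h4K

end Quad3

lemma rat_int {D : ℕ} (hDsf : Squarefree D) (s : ℚ) (k : ℤ)
    (h : (D : ℚ) * s ^ 2 = (k : ℚ)) : ∃ y : ℤ, (y : ℚ) = s := by
  have hden : (s.den : ℚ) ≠ 0 := by exact_mod_cast s.den_nz
  have hs : ((s.num : ℚ) / (s.den : ℚ)) = s := Rat.num_div_den s
  have hint : (D : ℤ) * s.num ^ 2 = k * (s.den : ℤ) ^ 2 := by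
    have : (D : ℚ) * ((s.num : ℚ) / (s.den : ℚ)) ^ 2 = (k : ℚ) := by rw [hs]; exact h
    field_simp at this
    have h' : (D : ℤ) * s.num ^ 2 = ((s.den ^ 2 : ℕ) : ℤ) * k := by exact_mod_cast this
    rw [h']; push_cast; ring
  have hdvd : (s.den : ℤ) ^ 2 ∣ (D : ℤ) * s.num ^ 2 := ⟨k, by linarith [hint]⟩
  have hdvdN : s.den ^ 2 ∣ D * s.num.natAbs ^ 2 := by
    have := Int.natAbs_dvd_natAbs.mpr hdvd
    simpa [Int.natAbs_mul, Int.natAbs_pow] using this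
  have hcop : (s.den ^ 2).Coprime (s.num.natAbs ^ 2) :=
    Nat.Coprime.pow 2 2 (Nat.coprime_comm.mp s.reduced)
  have hdvdD : s.den ^ 2 ∣ D := (Nat.Coprime.dvd_of_dvd_mul_right hcop hdvdN)
  have hden1 : s.den = 1 := by
    have := hDsf s.den (by rwa [← pow_two])
    exact Nat.isUnit_iff.mp this
  exact ⟨s.num, by rw [← hs, hden1]; simp⟩

section Quad4

variable {K : Type*} [Field K] [NumberField K] {D : ℕ} {θ : K}

local notation "e" => algebraMap ℚ K

variable (hD3 : 3 < D) (hDsf : Squarefree D) (hDmod : D % 4 = 3)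
  (hθ : θ ^ 2 = -(D : K)) (hrank : Module.finrank ℚ K = 2)

include hDmod hθ in
lemma mem_int (x y : ℤ) (hpar : x % 2 = y % 2) :
    IsIntegral ℤ (e ((x : ℚ) / 2) + e ((y : ℚ) / 2) * θ) := by
  obtain ⟨m, hm⟩ : (2 : ℤ) ∣ (x - y) := by omega
  have key : e ((x : ℚ) / 2) + e ((y : ℚ) / 2) * θ
      = algebraMap ℤ K m + algebraMap ℤ K y * ((1 + θ) / 2) := by
    have hxq : (x : ℚ) = 2 * m + y := by exact_mod_cast (by linarith [hm] : x = 2 * m + y)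
    rw [eq_intCast (algebraMap ℤ K) m, eq_intCast (algebraMap ℤ K) y]
    rw [hxq]
    push_cast
    field_simp
    simp only [Algebra.cast, map_ofNat, eq_ratCast, Rat.cast_intCast]
    ring
  rw [key]
  exact (isIntegral_algebraMap (R := ℤ) (A := K)).add
    ((isIntegral_algebraMap (R := ℤ) (A := K)).mul (omega_int hDmod hθ))

include hD3 hDsf hDmod hθ hrank in
lemma coords_int (α : 𝓞 K) :
    ∃ x y : ℤ, (α : K) = e ((x : ℚ) / 2) + e ((y : ℚ) / 2) * θ ∧ x % 2 = y % 2
      ∧ Algebra.norm ℚ (α : K) = ((x ^ 2 + D * y ^ 2 : ℤ) : ℚ) / 4 := by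
  have hD : 0 < D := by omega
  obtain ⟨a, b, hab⟩ := exists_coords hD hθ hrank (α : K)
  have hint : IsIntegral ℤ (α : K) := RingOfIntegers.isIntegral_coe α
  -- trace is an integer
  obtain ⟨t, ht⟩ := IsIntegrallyClosed.isIntegral_iff.mp
    (Algebra.isIntegral_trace (R := ℤ) (L := ℚ) (F := K) hint)
  obtain ⟨n, hn⟩ := IsIntegrallyClosed.isIntegral_iff.mp
    (Algebra.isIntegral_norm (R := ℤ) (K := ℚ) (L := K) hint)
  rw [hab, trace_formula hD hθ hrank] at ht
  rw [hab, norm_formula hD hθ hrank] at hn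
  have ht' : (t : ℚ) = 2 * a := by exact_mod_cast ht
  have hn' : (n : ℚ) = a ^ 2 + D * b ^ 2 := by exact_mod_cast hn
  -- 2b is an integer
  have hDb : (D : ℚ) * (2 * b) ^ 2 = ((4 * n - t ^ 2 : ℤ) : ℚ) := by
    push_cast
    rw [ht', hn']
    ring
  obtain ⟨s, hs⟩ := rat_int hDsf (2 * b) _ hDb
  have ha2 : a = (t : ℚ) / 2 := by rw [ht']; ring
  have hb2 : b = (s : ℚ) / 2 := by rw [hs]; ring
  have hpar : t % 2 = s % 2 := by
    apply parity_lemma hDmod t s n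
    have : (t : ℚ) ^ 2 + (D : ℚ) * (s : ℚ) ^ 2 = 4 * (n : ℚ) := by
      rw [ht', hs, hn']; ring
    exact_mod_cast this
  refine ⟨t, s, by rw [hab, ha2, hb2], hpar, ?_⟩
  rw [hab, norm_formula hD hθ hrank, ha2, hb2]
  push_cast
  ring

end Quad4

lemma sq_vals (k : ℤ) : k ^ 2 = 0 ∨ k ^ 2 = 1 ∨ 4 ≤ k ^ 2 := by
  by_cases hk : k = 0
  · left; rw [hk]; ring
  by_cases hk1 : k = 1 ∨ k = -1
  · right; left; rcases hk1 with h | h <;> rw [h] <;> ring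
  · right; right
    have h2 : 2 ≤ k ∨ k ≤ -2 := by omega
    rcases h2 with h | h <;> nlinarith

lemma quad_val {D : ℕ} (hD3 : 3 < D) (hDmod : D % 4 = 3) (x y : ℤ) (hpar : x % 2 = y % 2) :
    x ^ 2 + (D : ℤ) * y ^ 2 = 0 ∨ x ^ 2 + (D : ℤ) * y ^ 2 = 4
      ∨ 8 ≤ x ^ 2 + (D : ℤ) * y ^ 2 := by
  have hD7 : 7 ≤ D := by omega
  have hD7' : (7 : ℤ) ≤ (D : ℤ) := by exact_mod_cast hD7
  by_cases hy : y = 0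
  · subst hy
    obtain ⟨k, hk⟩ : (2 : ℤ) ∣ x := by omega
    rcases sq_vals k with h | h | h
    · left; rw [hk]; nlinarith
    · right; left; rw [hk]; nlinarith
    · right; right; rw [hk]; nlinarith
  · have hy1 : 1 ≤ y ^ 2 := by rcases (by omega : y ≤ -1 ∨ 1 ≤ y) with h | h <;> nlinarith
    right; right
    have hx2 : x % 2 = 0 ∨ x % 2 = 1 := by omega
    rcases hx2 with hx | hx
    · -- x even hence y even, y^2 ≥ 4
      obtain ⟨l, hl⟩ : (2 : ℤ) ∣ y := by omega
      have hl0 : l ≠ 0 := by rintro rfl; simp at hl; exact hy hl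
      have : 1 ≤ l ^ 2 := by rcases (by omega : l ≤ -1 ∨ 1 ≤ l) with h | h <;> nlinarith
      have hy4 : 4 ≤ y ^ 2 := by rw [hl]; nlinarith
      nlinarith [sq_nonneg x]
    · have hx1 : 1 ≤ x ^ 2 := by rcases (by omega : x ≤ -1 ∨ 1 ≤ x) with h | h <;> nlinarith
      nlinarith

section Quad5

variable {K : Type*} [Field K] [NumberField K] {D : ℕ} {θ : K}

local notation "e" => algebraMap ℚ K

variable (hD3 : 3 < D) (hDsf : Squarefree D) (hDmod : D % 4 = 3)
  (hθ : θ ^ 2 = -(D : K)) (hrank : Module.finrank ℚ K = 2)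

include hD3 hDsf hDmod hθ hrank in
lemma norm_one_pm {α : 𝓞 K} (hN : Algebra.norm ℚ (α : K) = 1) :
    (α : K) = 1 ∨ (α : K) = -1 := by
  obtain ⟨x, y, hxy, hpar, hnorm⟩ := coords_int hD3 hDsf hDmod hθ hrank α
  have hA : x ^ 2 + (D : ℤ) * y ^ 2 = 4 := by
    have : ((x ^ 2 + D * y ^ 2 : ℤ) : ℚ) / 4 = 1 := by rw [← hnorm, hN]
    have h4 : ((x ^ 2 + D * y ^ 2 : ℤ) : ℚ) = 4 := by field_simp at this; exact_mod_cast this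
    exact_mod_cast h4
  have hD7' : (7 : ℤ) ≤ (D : ℤ) := by exact_mod_cast (by omega : 7 ≤ D)
  have hy : y = 0 := by nlinarith [sq_nonneg y, sq_nonneg x, (by omega : y = 0 ∨ y ≤ -1 ∨ 1 ≤ y)]
  subst hy
  have hx4 : x ^ 2 = 4 := by linarith [hA]
  have : (x - 2) * (x + 2) = 0 := by nlinarith
  rcases mul_eq_zero.mp this with h | h
  · left
    have hx : x = 2 := by omega
    rw [hxy, hx]; norm_num
  · right
    have hx : x = -2 := by omega
    rw [hxy, hx]; norm_num

include hD3 hDsf hDmod hθ hrank in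
lemma unit_pm (u : (𝓞 K)ˣ) : ((u : 𝓞 K) : K) = 1 ∨ ((u : 𝓞 K) : K) = -1 := by
  have hmul : ((u : 𝓞 K) * ((u⁻¹ : (𝓞 K)ˣ) : 𝓞 K)) = (1 : 𝓞 K) := u.mul_inv
  have hmulK : ((u : 𝓞 K) : K) * (((u⁻¹ : (𝓞 K)ˣ) : 𝓞 K) : K) = 1 := by
    rw [RingOfIntegers.coe_eq_algebraMap, RingOfIntegers.coe_eq_algebraMap,
      ← map_mul, hmul, map_one]
  have hN : Algebra.norm ℚ ((u : 𝓞 K) : K) * Algebra.norm ℚ (((u⁻¹ : (𝓞 K)ˣ) : 𝓞 K) : K) = 1 := by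
    rw [← map_mul, hmulK, map_one]
  obtain ⟨x, y, hxy, hpar, hnorm⟩ := coords_int hD3 hDsf hDmod hθ hrank (u : 𝓞 K)
  obtain ⟨x', y', hxy', hpar', hnorm'⟩ := coords_int hD3 hDsf hDmod hθ hrank ((u⁻¹ : (𝓞 K)ˣ) : 𝓞 K)
  set A : ℤ := x ^ 2 + D * y ^ 2 with hAdef
  set B : ℤ := x' ^ 2 + D * y' ^ 2 with hBdef
  have hAB : A * B = 16 := by
    have : ((A : ℚ) / 4) * ((B : ℚ) / 4) = 1 := by rw [← hnorm, ← hnorm', hN]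
    have : (A : ℚ) * (B : ℚ) = 16 := by field_simp at this; linarith
    exact_mod_cast this
  have hA4 : A = 4 := by
    have h := quad_val hD3 hDmod x y hpar
    rw [← hAdef] at h
    have h' := quad_val hD3 hDmod x' y' hpar'
    rw [← hBdef] at h'
    rcases h with h | h | h
    · rw [h, zero_mul] at hAB; omega
    · exact h
    · rcases h' with h' | h' | h'
      · rw [h', mul_zero] at hAB; omega
      · rw [h'] at hAB; omega
      · nlinarith
  apply norm_one_pm hD3 hDsf hDmod hθ hrank (α := (u : 𝓞 K))
  rw [hnorm, hA4]
  norm_num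

end Quad5

section Quad6

variable {K : Type*} [Field K] [NumberField K] {D : ℕ} {θ : K} {p : ℕ} [Fact p.Prime]

local notation "e" => algebraMap ℚ K

variable (hD3 : 3 < D) (hDsf : Squarefree D) (hDmod : D % 4 = 3)
  (hθ : θ ^ 2 = -(D : K)) (hrank : Module.finrank ℚ K = 2)

include hD3 hDsf hDmod hθ hrank in
lemma sol_elts (x y : ℤ) (hpar : x % 2 = y % 2) (hsol : x ^ 2 + (D : ℤ) * y ^ 2 = 4 * p) :
    ∃ α β : 𝓞 K, (α : K) = e ((x : ℚ) / 2) + e ((y : ℚ) / 2) * θ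
      ∧ (β : K) = e ((x : ℚ) / 2) + e ((-y : ℚ) / 2) * θ
      ∧ α * β = (p : 𝓞 K)
      ∧ Ideal.absNorm (Ideal.span {α}) = p ∧ Ideal.absNorm (Ideal.span {β}) = p := by
  have hD : 0 < D := by omega
  have hpar2 : x % 2 = (-y) % 2 := by omega
  have hc : (x : ℚ) ^ 2 + (D : ℚ) * (y : ℚ) ^ 2 = 4 * (p : ℚ) := by exact_mod_cast hsol
  obtain ⟨α, hcα⟩ : ∃ α : 𝓞 K, (α : K) = e ((x : ℚ) / 2) + e ((y : ℚ) / 2) * θ :=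
    ⟨⟨_, mem_int hDmod hθ x y hpar⟩, rfl⟩
  obtain ⟨β, hcβ⟩ : ∃ β : 𝓞 K, (β : K) = e ((x : ℚ) / 2) + e ((-y : ℚ) / 2) * θ := by
    refine ⟨⟨_, mem_int hDmod hθ x (-y) hpar2⟩, ?_⟩
    push_cast
    rfl
  have hNα : Algebra.norm ℤ α = (p : ℤ) := by
    have hcoe := Algebra.coe_norm_int α
    rw [hcα, norm_formula hD hθ hrank] at hcoe
    have : ((Algebra.norm ℤ α : ℤ) : ℚ) = (p : ℚ) := by
      rw [hcoe]; field_simp; linarith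
    exact_mod_cast this
  have hNβ : Algebra.norm ℤ β = (p : ℤ) := by
    have hcoe := Algebra.coe_norm_int β
    rw [hcβ, norm_formula hD hθ hrank] at hcoe
    have : ((Algebra.norm ℤ β : ℤ) : ℚ) = (p : ℚ) := by
      rw [hcoe]; push_cast; field_simp; linarith
    exact_mod_cast this
  refine ⟨α, β, hcα, hcβ, ?_, ?_, ?_⟩
  · apply RingOfIntegers.ext
    rw [RingOfIntegers.coe_eq_algebraMap, map_mul, ← RingOfIntegers.coe_eq_algebraMap,
      ← RingOfIntegers.coe_eq_algebraMap, hcα, hcβ,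
      show (((p : ℕ) : 𝓞 K) : K) = ((p : ℚ) : K) by push_cast; rfl]
    have hq : ((x : ℚ) / 2) ^ 2 + ((y : ℚ) / 2) ^ 2 * (D : ℚ) = (p : ℚ) := by linarith
    rw [show (((p : ℚ)) : K) = e ((p : ℚ)) from rfl, ← hq]
    push_cast
    simp only [map_add, map_pow, map_mul, map_natCast, map_div₀, map_neg, map_ofNat, eq_ratCast]
    push_cast
    linear_combination (-(((y : ℤ) : K)) ^ 2 / 4) * hθ
  · rw [Ideal.absNorm_span_singleton, hNα]
    simp
  · rw [Ideal.absNorm_span_singleton, hNβ]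
    simp

end Quad6

section Quad7

set_option synthInstance.maxHeartbeats 1000000
set_option maxHeartbeats 1000000

variable {K : Type*} [Field K] [NumberField K] {D : ℕ} {θ : K} {p : ℕ} [Fact p.Prime]

local notation "e" => algebraMap ℚ K

variable (hD3 : 3 < D) (hDsf : Squarefree D) (hDmod : D % 4 = 3)
  (hθ : θ ^ 2 = -(D : K)) (hrank : Module.finrank ℚ K = 2)

lemma span_prime {α : 𝓞 K} (h : Ideal.absNorm (Ideal.span {α}) = p) :
    (Ideal.span {α} : Ideal (𝓞 K)).IsPrime :=
  Ideal.isPrime_of_irreducible_absNorm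
    (by rw [h]; exact (Nat.prime_iff.mp (Fact.out : p.Prime)).irreducible)

include hD3 hDsf hDmod hθ hrank in
lemma dir1 (x y : ℤ) (hx : 0 < x) (hy : 0 < y) (hsol : x ^ 2 + (D : ℤ) * y ^ 2 = 4 * p) :
    ∃ P Q : Ideal (𝓞 K), P.IsPrime ∧ Q.IsPrime
      ∧ Submodule.IsPrincipal P ∧ Submodule.IsPrincipal Q
      ∧ Ideal.span {(p : 𝓞 K)} = P * Q := by
  have hpar := parity_lemma hDmod x y p hsol
  obtain ⟨α, β, hcα, hcβ, hprod, hNα, hNβ⟩ := sol_elts hD3 hDsf hDmod hθ hrank x y hpar hsol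
  refine ⟨Ideal.span {α}, Ideal.span {β}, span_prime hNα, span_prime hNβ,
    ⟨⟨α, rfl⟩⟩, ⟨⟨β, rfl⟩⟩, ?_⟩
  rw [Ideal.span_singleton_mul_span_singleton, hprod]

include hD3 hDsf hDmod hθ hrank in
lemma uniq (x y x' y' : ℤ) (hx : 0 < x) (hy : 0 < y) (hx' : 0 < x') (hy' : 0 < y')
    (hsol : x ^ 2 + (D : ℤ) * y ^ 2 = 4 * p) (hsol' : x' ^ 2 + (D : ℤ) * y' ^ 2 = 4 * p) :
    x' = x ∧ y' = y := by
  have hD : 0 < D := by omega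
  have hpar := parity_lemma hDmod x y p hsol
  have hpar' := parity_lemma hDmod x' y' p hsol'
  obtain ⟨α, β, hcα, hcβ, hprod, hNα, hNβ⟩ := sol_elts hD3 hDsf hDmod hθ hrank x y hpar hsol
  obtain ⟨α', β', hcα', hcβ', hprod', hNα', hNβ'⟩ :=
    sol_elts hD3 hDsf hDmod hθ hrank x' y' hpar' hsol'
  have hp0 : p ≠ 0 := (Fact.out : p.Prime).pos.ne'
  have hbot : (Ideal.span {α'} : Ideal (𝓞 K)) ≠ ⊥ := by
    rw [Ne, Ideal.span_singleton_eq_bot]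
    intro h0
    have h1 : e ((0 : ℚ)) + e ((0 : ℚ)) * θ = e ((x' : ℚ) / 2) + e ((y' : ℚ) / 2) * θ := by
      rw [← hcα', h0]; simp
    have := (coords_unique hD hθ hrank h1).2
    rw [eq_comm, div_eq_iff (by norm_num : (2:ℚ) ≠ 0)] at this
    simp at this
    omega
  have hPrime : Prime (Ideal.span {α'} : Ideal (𝓞 K)) :=
    Ideal.prime_of_isPrime hbot (span_prime hNα')
  have hdvd : (Ideal.span {α'} : Ideal (𝓞 K)) ∣ Ideal.span {α} * Ideal.span {β} := by
    rw [Ideal.span_singleton_mul_span_singleton, hprod, ← hprod',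
      ← Ideal.span_singleton_mul_span_singleton]
    exact dvd_mul_right _ _
  -- helper to extract equality of spans from divisibility
  have key : ∀ γ : 𝓞 K, Ideal.absNorm (Ideal.span {γ}) = p →
      (Ideal.span {α'} : Ideal (𝓞 K)) ∣ Ideal.span {γ} →
      ∃ u : (𝓞 K)ˣ, (γ : K) * ((u : 𝓞 K) : K) = (α' : K) := by
    intro γ hNγ hd
    obtain ⟨J, hJ⟩ := hd
    have hJn : p = p * Ideal.absNorm J := by
      calc p = Ideal.absNorm (Ideal.span {γ}) := hNγ.symm
        _ = Ideal.absNorm (Ideal.span {α'} * J) := by rw [hJ]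
        _ = Ideal.absNorm (Ideal.span {α'} : Ideal (𝓞 K)) * Ideal.absNorm J :=
            _root_.map_mul Ideal.absNorm _ _
        _ = p * Ideal.absNorm J := by rw [hNα']
    have hJ1 : Ideal.absNorm J = 1 := by
      rcases Nat.eq_zero_or_pos (Ideal.absNorm J) with h | h
      · rw [h] at hJn; omega
      · nlinarith [hJn]
    rw [Ideal.absNorm_eq_one_iff] at hJ1
    rw [hJ1, Ideal.mul_top] at hJ
    have hassoc : Associated γ α' := Ideal.span_singleton_eq_span_singleton.mp hJ
    obtain ⟨u, hu⟩ := hassoc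
    refine ⟨u, ?_⟩
    rw [← hu]
    rw [RingOfIntegers.coe_eq_algebraMap, RingOfIntegers.coe_eq_algebraMap,
      RingOfIntegers.coe_eq_algebraMap, map_mul]
  rcases hPrime.2.2 _ _ hdvd with hd | hd
  · obtain ⟨u, hu⟩ := key α hNα hd
    rcases unit_pm hD3 hDsf hDmod hθ hrank u with h1 | h1 <;> rw [h1] at hu
    · rw [mul_one, hcα, hcα'] at hu
      obtain ⟨h2, h3⟩ := coords_unique hD hθ hrank hu
      constructor
      · have : (x : ℚ) = (x' : ℚ) := by linarith
        exact_mod_cast this.symm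
      · have : (y : ℚ) = (y' : ℚ) := by linarith
        exact_mod_cast this.symm
    · exfalso
      rw [hcα, hcα'] at hu
      have hu2 : e (-((x : ℚ) / 2)) + e (-((y : ℚ) / 2)) * θ
          = e ((x' : ℚ) / 2) + e ((y' : ℚ) / 2) * θ := by
        rw [← hu]; simp only [map_neg]; ring
      obtain ⟨h2, h3⟩ := coords_unique hD hθ hrank hu2
      have : -(x : ℚ) = (x' : ℚ) := by linarith
      have : -x = x' := by exact_mod_cast this
      omega
  · obtain ⟨u, hu⟩ := key β hNβ hd
    exfalso
    rcases unit_pm hD3 hDsf hDmod hθ hrank u with h1 | h1 <;> rw [h1] at hu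
    · rw [mul_one, hcβ, hcα'] at hu
      obtain ⟨h2, h3⟩ := coords_unique hD hθ hrank hu
      have : (-y : ℚ) = (y' : ℚ) := by linarith
      have : -y = y' := by exact_mod_cast this
      omega
    · rw [hcβ, hcα'] at hu
      have hu2 : e (-((x : ℚ) / 2)) + e (-((-y : ℚ) / 2)) * θ
          = e ((x' : ℚ) / 2) + e ((y' : ℚ) / 2) * θ := by
        rw [← hu]; simp only [map_neg]; ring
      obtain ⟨h2, h3⟩ := coords_unique hD hθ hrank hu2
      have : -(x : ℚ) = (x' : ℚ) := by linarith
      have : -x = x' := by exact_mod_cast this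
      omega

end Quad7

section Quad8

set_option synthInstance.maxHeartbeats 1000000
set_option maxHeartbeats 1000000

variable {K : Type*} [Field K] [NumberField K] {D : ℕ} {θ : K} {p : ℕ} [Fact p.Prime]

local notation "e" => algebraMap ℚ K

variable (hD3 : 3 < D) (hDsf : Squarefree D) (hDmod : D % 4 = 3)
  (hθ : θ ^ 2 = -(D : K)) (hrank : Module.finrank ℚ K = 2)
  (hsplit : legendreSym p (-(D : ℤ)) = 1)

include hD3 hDsf hDmod hθ hrank hsplit in
lemma norm_is_p {π : 𝓞 K} (hNπ : Algebra.norm ℤ π = (p : ℤ)) :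
    ∃ x y : ℤ, 0 < x ∧ 0 < y ∧ x ^ 2 + (D : ℤ) * y ^ 2 = 4 * p := by
  have hD : 0 < D := by omega
  have hpp : p.Prime := Fact.out
  obtain ⟨x, y, hxy, hpar, hnorm⟩ := coords_int hD3 hDsf hDmod hθ hrank π
  have hcoe := Algebra.coe_norm_int π
  rw [hNπ, hnorm] at hcoe
  have hA : x ^ 2 + (D : ℤ) * y ^ 2 = 4 * p := by
    have : ((x ^ 2 + (D : ℤ) * y ^ 2 : ℤ) : ℚ) = 4 * (p : ℚ) := by
      rw [eq_div_iff (by norm_num : (4:ℚ) ≠ 0)] at hcoe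
      push_cast at hcoe ⊢
      linarith
    exact_mod_cast this
  have hy0 : y ≠ 0 := by
    intro h0
    subst h0
    obtain ⟨k, hk⟩ : (2 : ℤ) ∣ x := by omega
    have hk2 : k ^ 2 = (p : ℤ) := by
      have h44 : 4 * k ^ 2 = 4 * (p : ℤ) := by rw [hk] at hA; nlinarith
      linarith
    have hk2' : k.natAbs ^ 2 = p := by
      have := congrArg Int.natAbs hk2
      simpa [Int.natAbs_pow] using this
    have hdvdp : k.natAbs ∣ p := ⟨k.natAbs, by rw [← hk2']; ring⟩
    rcases hpp.eq_one_or_self_of_dvd _ hdvdp with h | h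
    · rw [h] at hk2'
      have := hpp.two_le
      omega
    · rw [h] at hk2'
      have := hpp.two_le
      nlinarith
  have hx0 : x ≠ 0 := by
    intro h0
    subst h0
    have hDdvd : (D : ℤ) * y ^ 2 = 4 * p := by linarith
    have hDdvdN : D * y.natAbs ^ 2 = 4 * p := by
      have := congrArg Int.natAbs hDdvd
      simpa [Int.natAbs_mul, Int.natAbs_pow] using this
    have hdvd4p : D ∣ 4 * p := ⟨y.natAbs ^ 2, hDdvdN.symm⟩
    have hodd : Nat.Coprime D 2 := by
      rw [Nat.coprime_two_right]
      exact Nat.odd_iff.mpr (by omega)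
    have hcop4 : Nat.Coprime D 4 := by
      have := hodd.pow_right 2
      simpa using this
    have hdvdp : D ∣ p := hcop4.dvd_of_dvd_mul_left hdvd4p
    rcases (hpp.eq_one_or_self_of_dvd D hdvdp) with h | h
    · omega
    · exfalso
      have h0 : legendreSym p (-(D : ℤ)) = 0 := by
        rw [legendreSym.eq_zero_iff, h]
        push_cast
        simp
      rw [hsplit] at h0
      exact one_ne_zero h0
  refine ⟨|x|, |y|, abs_pos.mpr hx0, abs_pos.mpr hy0, ?_⟩
  rw [sq_abs, sq_abs]
  exact hA

end Quad8

section Quad9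

set_option synthInstance.maxHeartbeats 1000000
set_option maxHeartbeats 1000000

variable {K : Type*} [Field K] [NumberField K] {D : ℕ} {θ : K} {p : ℕ} [Fact p.Prime]

local notation "e" => algebraMap ℚ K

variable (hD3 : 3 < D) (hDsf : Squarefree D) (hDmod : D % 4 = 3)
  (hθ : θ ^ 2 = -(D : K)) (hrank : Module.finrank ℚ K = 2)
  (hsplit : legendreSym p (-(D : ℤ)) = 1)

include hD3 hDsf hDmod hθ hrank in
lemma norm_not_one {π : 𝓞 K} (hne : ¬ IsUnit π) (hn0 : Algebra.norm ℤ π ≠ 0) :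
    2 ≤ Algebra.norm ℤ π := by
  have hD : 0 < D := by omega
  obtain ⟨x, y, hxy, hpar, hnorm⟩ := coords_int hD3 hDsf hDmod hθ hrank π
  have hcoe := Algebra.coe_norm_int π
  rw [hnorm] at hcoe
  have hA : 4 * Algebra.norm ℤ π = x ^ 2 + (D : ℤ) * y ^ 2 := by
    rw [eq_div_iff (by norm_num : (4:ℚ) ≠ 0)] at hcoe
    exact_mod_cast (by push_cast at hcoe ⊢; linarith : ((4 * Algebra.norm ℤ π : ℤ) : ℚ)
      = ((x ^ 2 + (D : ℤ) * y ^ 2 : ℤ) : ℚ))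
  rcases quad_val hD3 hDmod x y hpar with h | h | h
  · exfalso; apply hn0; omega
  · exfalso
    apply hne
    have hN1 : Algebra.norm ℚ ((π : K)) = 1 := by
      rw [hnorm, h]; norm_num
    rcases norm_one_pm hD3 hDsf hDmod hθ hrank hN1 with h1 | h1
    · have : π = 1 := RingOfIntegers.ext (by rw [h1]; simp)
      rw [this]; exact isUnit_one
    · have : π = -1 := RingOfIntegers.ext (by rw [h1]; simp)
      rw [this]; exact isUnit_one.neg
  · omega

include hD3 hDsf hDmod hθ hrank hsplit in
lemma dir2
    (h : ∃ P Q : Ideal (𝓞 K), P.IsPrime ∧ Q.IsPrime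
      ∧ Submodule.IsPrincipal P ∧ Submodule.IsPrincipal Q
      ∧ Ideal.span {(p : 𝓞 K)} = P * Q) :
    ∃ x y : ℤ, 0 < x ∧ 0 < y ∧ x ^ 2 + (D : ℤ) * y ^ 2 = 4 * p := by
  have hD : 0 < D := by omega
  have hpp : p.Prime := Fact.out
  obtain ⟨P, Q, hP, hQ, hPp, hQp, hPQ⟩ := h
  obtain ⟨π, hπ⟩ := hPp
  obtain ⟨ρ, hρ⟩ := hQp
  have hπ' : P = Ideal.span {π} := by rw [hπ, Ideal.submodule_span_eq]
  have hρ' : Q = Ideal.span {ρ} := by rw [hρ, Ideal.submodule_span_eq]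
  have hspan : Ideal.span {((p : ℕ) : 𝓞 K)} = Ideal.span {π * ρ} := by
    rw [hPQ, hπ', hρ', Ideal.span_singleton_mul_span_singleton]
  obtain ⟨u, hu⟩ := Ideal.span_singleton_eq_span_singleton.mp hspan
  have hcast : ∀ a b : 𝓞 K, ((a * b : 𝓞 K) : K) = (a : K) * (b : K) := fun a b =>
    map_mul (algebraMap (𝓞 K) K) a b
  have hNu : Algebra.norm ℚ (((u : 𝓞 K)) : K) = 1 := by
    rcases unit_pm hD3 hDsf hDmod hθ hrank u with h1 | h1 <;> rw [h1]
    · exact map_one _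
    · rw [show (-1 : K) = e (-1) + e 0 * θ by simp, norm_formula hD hθ hrank]
      norm_num
  have hNp : Algebra.norm ℚ (((p : ℕ) : 𝓞 K) : K) = (p : ℚ) ^ 2 := by
    rw [show (((p : ℕ) : 𝓞 K) : K) = e ((p : ℚ)) + e 0 * θ by push_cast; simp,
      norm_formula hD hθ hrank]
    norm_num
  have hnn : (p : ℚ) ^ 2 = Algebra.norm ℚ ((π : K)) * Algebra.norm ℚ ((ρ : K)) := by
    have h1 := congrArg (fun z : 𝓞 K => Algebra.norm ℚ ((z : K))) hu
    simp only [hcast] at h1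
    rw [map_mul, map_mul, hNp, hNu, mul_one] at h1
    exact h1
  have hint : (p : ℤ) ^ 2 = Algebra.norm ℤ π * Algebra.norm ℤ ρ := by
    have : ((p : ℤ) ^ 2 : ℚ) = ((Algebra.norm ℤ π * Algebra.norm ℤ ρ : ℤ) : ℚ) := by
      push_cast
      rw [Algebra.coe_norm_int, Algebra.coe_norm_int]
      exact_mod_cast hnn
    exact_mod_cast this
  have hp0 : (p : ℤ) ≠ 0 := by exact_mod_cast hpp.pos.ne'
  have hππ : ¬ IsUnit π := by
    intro hun
    exact hP.ne_top (by rw [hπ', Ideal.span_singleton_eq_top]; exact hun)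
  have hρρ : ¬ IsUnit ρ := by
    intro hun
    exact hQ.ne_top (by rw [hρ', Ideal.span_singleton_eq_top]; exact hun)
  have hπ0 : Algebra.norm ℤ π ≠ 0 := by
    intro h0; rw [h0, zero_mul] at hint; exact (pow_ne_zero 2 hp0) hint
  have hρ0 : Algebra.norm ℤ ρ ≠ 0 := by
    intro h0; rw [h0, mul_zero] at hint; exact (pow_ne_zero 2 hp0) hint
  have h2π := norm_not_one hD3 hDsf hDmod hθ hrank hππ hπ0
  have h2ρ := norm_not_one hD3 hDsf hDmod hθ hrank hρρ hρ0
  -- pass to natural numbers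
  set m := (Algebra.norm ℤ π).toNat with hm
  set k := (Algebra.norm ℤ ρ).toNat with hk
  have hmz : (m : ℤ) = Algebra.norm ℤ π := Int.toNat_of_nonneg (by omega)
  have hkz : (k : ℤ) = Algebra.norm ℤ ρ := Int.toNat_of_nonneg (by omega)
  have hmk : m * k = p ^ 2 := by
    have : ((m * k : ℕ) : ℤ) = ((p ^ 2 : ℕ) : ℤ) := by push_cast [hmz, hkz]; linarith [hint]
    exact_mod_cast this
  have hm2 : 2 ≤ m := by omega
  have hk2 : 2 ≤ k := by omega
  have hmp : m = p := by
    obtain ⟨i, hi, hmi⟩ := (Nat.dvd_prime_pow hpp).mp ⟨k, hmk.symm⟩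
    interval_cases i
    · rw [pow_zero] at hmi; omega
    · simpa using hmi
    · exfalso
      rw [hmi] at hmk
      have : k = 1 := by
        have hpos : 0 < p ^ 2 := pow_pos hpp.pos 2
        nlinarith
      omega
  have hNπ : Algebra.norm ℤ π = (p : ℤ) := by rw [← hmz, hmp]
  exact norm_is_p hD3 hDsf hDmod hθ hrank hsplit hNπ

end Quad9

/-- Let `K = ℚ(√-D)` with `D > 3` squarefree, `D ≡ 3 mod 4`, and let `p` be a prime
with `(-D|p) = 1` (so `p` splits in `𝓞 K`). Then the number of pairs `(x,y)` of positive
integers with `x² + D·y² = 4p` is `1` if `p·𝓞 K` splits into principal prime ideals and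
`0` otherwise. -/
theorem norm_equation_count (D p : ℕ) [Fact p.Prime]
    (hD3 : 3 < D) (hDsf : Squarefree D) (hDmod : D % 4 = 3)
    (hsplit : legendreSym p (-(D : ℤ)) = 1)
    (K : Type*) [Field K] [NumberField K]
    (θ : K) (hθ : θ ^ 2 = -(D : K)) (hrank : Module.finrank ℚ K = 2) :
    Set.ncard {xy : ℤ × ℤ | 0 < xy.1 ∧ 0 < xy.2
        ∧ xy.1 ^ 2 + (D : ℤ) * xy.2 ^ 2 = 4 * (p : ℤ)}
      = if ∃ P Q : Ideal (𝓞 K), P.IsPrime ∧ Q.IsPrime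
            ∧ Submodule.IsPrincipal P ∧ Submodule.IsPrincipal Q
            ∧ Ideal.span {(p : 𝓞 K)} = P * Q
        then 1 else 0 := by
  by_cases hcond : ∃ P Q : Ideal (𝓞 K), P.IsPrime ∧ Q.IsPrime
      ∧ Submodule.IsPrincipal P ∧ Submodule.IsPrincipal Q
      ∧ Ideal.span {(p : 𝓞 K)} = P * Q
  · rw [if_pos hcond]
    obtain ⟨x, y, hx, hy, hsol⟩ := dir2 hD3 hDsf hDmod hθ hrank hsplit hcond
    have hset : {xy : ℤ × ℤ | 0 < xy.1 ∧ 0 < xy.2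
        ∧ xy.1 ^ 2 + (D : ℤ) * xy.2 ^ 2 = 4 * (p : ℤ)} = {(x, y)} := by
      ext ⟨a, b⟩
      simp only [Set.mem_setOf_eq, Set.mem_singleton_iff, Prod.mk.injEq]
      constructor
      · rintro ⟨ha, hb, hab⟩
        exact uniq hD3 hDsf hDmod hθ hrank x y a b hx hy ha hb hsol hab
      · rintro ⟨rfl, rfl⟩
        exact ⟨hx, hy, hsol⟩
    rw [hset, Set.ncard_singleton]
  · rw [if_neg hcond]
    have hset : {xy : ℤ × ℤ | 0 < xy.1 ∧ 0 < xy.2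
        ∧ xy.1 ^ 2 + (D : ℤ) * xy.2 ^ 2 = 4 * (p : ℤ)} = ∅ := by
      ext ⟨a, b⟩
      simp only [Set.mem_setOf_eq, Set.mem_empty_iff_false, iff_false, not_and]
      intro ha hb hab
      exact hcond (dir1 hD3 hDsf hDmod hθ hrank a b ha hb hab)
    rw [hset, Set.ncard_empty]
end

section
/- Let p be an odd prime and e ≥ 1. Then the sum over odd residues x mod 2^{e+3} of ((x² - 4p)|2)^e equals 4·(-2)^e, where ((x²-4p)|2) is the Kronecker symbol at 2; for e = 0 the sum over odd x mod 8 of 1 equals 4. -/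


lemma card_odd_range (n : ℕ) : ((Finset.range (2*n)).filter (fun x => Odd x)).card = n := by
  induction n with
  | zero => simp
  | succ n ih =>
    rw [show 2*(n+1) = (2*n+1)+1 by ring, Finset.range_add_one, Finset.filter_insert,
      Finset.range_add_one, Finset.filter_insert]
    have h1 : Odd (2*n+1) := ⟨n, by ring⟩
    have h2 : ¬ Odd (2*n) := by simp [Nat.not_odd_iff_even]
    simp [h1, h2, ih, Finset.card_insert_of_notMem, Finset.mem_filter]


/-- For an odd prime `p` and `e ≥ 1`, the sum over odd residues `x mod 2^{e+3}` of
`((x² - 4p)|2)^e` (Kronecker symbol at 2, i.e. `χ₈`) equals `4·(-2)^e`; and for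
`e = 0` the number of odd residues `x mod 8` is `4`. -/
theorem sum_chi8_local_at_two (p : ℕ) (hp : p.Prime) (hpodd : Odd p) (e : ℕ) (he : 1 ≤ e) :
    (∑ x ∈ (Finset.range (2 ^ (e + 3))).filter (fun x => Odd x),
        (ZMod.χ₈ (((x : ℤ) ^ 2 - 4 * (p : ℤ) : ℤ) : ZMod 8)) ^ e = 4 * (-2 : ℤ) ^ e)
    ∧ ((Finset.range 8).filter (fun x => Odd x)).card = 4 := by
  constructor
  · have hterm : ∀ x ∈ (Finset.range (2 ^ (e + 3))).filter (fun x => Odd x),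
        (ZMod.χ₈ (((x : ℤ) ^ 2 - 4 * (p : ℤ) : ℤ) : ZMod 8)) ^ e = (-1 : ℤ) ^ e := by
      intro x hx
      have hxo : Odd x := (Finset.mem_filter.mp hx).2
      have hcast : (((x : ℤ) ^ 2 - 4 * (p : ℤ) : ℤ) : ZMod 8) = 5 := by
        push_cast
        obtain ⟨k, hk⟩ := hxo
        obtain ⟨m, hm⟩ := hpodd
        subst hk hm
        push_cast
        ring_nf
        have h8 : ∀ a b : ZMod 8, (2*a+1)^2 - 4*(2*b+1) = 5 := by decide
        have := h8 (k : ZMod 8) (m : ZMod 8)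
        ring_nf at this ⊢
        convert this using 2 <;> ring
      rw [hcast]
      norm_num [show ZMod.χ₈ (5 : ZMod 8) = -1 from by decide]
    rw [Finset.sum_congr rfl hterm, Finset.sum_const]
    have : 2 ^ (e + 3) = 2 * 2 ^ (e+2) := by ring
    rw [this, card_odd_range]
    rw [show ((-2:ℤ))^e = (-1)^e * 2^e by rw [← neg_one_mul, mul_pow]]
    push_cast
    ring
  · decide
end

section
/- With c̄ = (1/3)·∏_{ℓ>2 prime} (1 - ℓ^{-2} - ℓ^{-3}/(1-ℓ^{-2})), A = ∏_p (1 + p/((p+1)²(p-1))), and Q(d) the multiplicative function with Q(2)=1 and Q(q) = q²/(q⁴-2q²-q+1) for odd primes q supported on squarefree d, the Euler product identities (ζ(2)·c̄/A)·∑_{d≥1} Q(d) = 8/11 and ζ(2)·c̄·∑_{d≥1} Q(d)/d = 2/3 hold. -/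
open scoped Real
set_option maxHeartbeats 1000000

/-- `Q` is the multiplicative function supported on squarefree numbers with
`Q(q) = q²/(q⁴ - 2q² - q + 1)` at odd primes `q` and `Q(2) = 1`. -/
noncomputable def murmurQ (d : ℕ) : ℝ :=
  if Squarefree d then
    ∏ q ∈ d.primeFactors.erase 2,
      (q : ℝ) ^ 2 / ((q : ℝ) ^ 4 - 2 * (q : ℝ) ^ 2 - (q : ℝ) + 1)
  else 0

/-- `c̄ = (1/3)·∏_{ℓ>2} (1 - ℓ⁻² - ℓ⁻³/(1-ℓ⁻²))`, product over odd primes. -/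
noncomputable def murmurCbar : ℝ :=
  (1 / 3) * ∏' ℓ : {q : Nat.Primes // (q : ℕ) ≠ 2},
    (1 - ((ℓ : Nat.Primes) : ℝ)⁻¹ ^ 2
       - ((ℓ : Nat.Primes) : ℝ)⁻¹ ^ 3 / (1 - ((ℓ : Nat.Primes) : ℝ)⁻¹ ^ 2))

/-- `A = ∏_p (1 + p/((p+1)²(p-1)))`, product over all primes. -/
noncomputable def murmurA : ℝ :=
  ∏' p : Nat.Primes, (1 + (p : ℝ) / (((p : ℝ) + 1) ^ 2 * ((p : ℝ) - 1)))


/-! ### Auxiliary: multiplicative functions supported on squarefree numbers -/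

noncomputable def sfm (v : ℕ → ℝ) (d : ℕ) : ℝ :=
  if Squarefree d then ∏ q ∈ d.primeFactors, v q else 0

lemma sfm_zero (v : ℕ → ℝ) : sfm v 0 = 0 := by simp [sfm, not_squarefree_zero]

lemma sfm_one (v : ℕ → ℝ) : sfm v 1 = 1 := by simp [sfm]

lemma sfm_mul (v : ℕ → ℝ) {m n : ℕ} (h : Nat.Coprime m n) :
    sfm v (m * n) = sfm v m * sfm v n := by
  by_cases hm : Squarefree m
  · by_cases hn : Squarefree n
    · rw [sfm, sfm, sfm, if_pos hm, if_pos hn, if_pos ((Nat.squarefree_mul h).mpr ⟨hm, hn⟩),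
        Nat.Coprime.primeFactors_mul h, Finset.prod_union (Nat.Coprime.disjoint_primeFactors h)]
    · simp only [sfm]
      rw [if_neg hn, if_neg (fun hc : Squarefree (m*n) => hn hc.of_mul_right), mul_zero]
  · simp only [sfm]
    rw [if_neg hm, if_neg (fun hc : Squarefree (m*n) => hm hc.of_mul_left), zero_mul]

lemma sfm_prime (v : ℕ → ℝ) {p : ℕ} (hp : p.Prime) : sfm v p = v p := by
  rw [sfm, if_pos hp.squarefree, hp.primeFactors, Finset.prod_singleton]

lemma sfm_prime_pow (v : ℕ → ℝ) {p : ℕ} (hp : p.Prime) {e : ℕ} (he : 2 ≤ e) :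
    sfm v (p ^ e) = 0 := by
  rw [sfm, if_neg]
  intro hc
  rw [Nat.squarefree_pow_iff hp.ne_one (by omega)] at hc
  omega

lemma sfm_tsum_pow (v : ℕ → ℝ) {p : ℕ} (hp : p.Prime) :
    ∑' e : ℕ, sfm v (p ^ e) = 1 + v p := by
  rw [tsum_eq_sum (s := {0, 1}) (fun e he => sfm_prime_pow v hp (by
    simp only [Finset.mem_insert, Finset.mem_singleton] at he; omega))]
  rw [Finset.sum_pair (by norm_num), pow_zero, pow_one, sfm_one, sfm_prime v hp]

lemma two_rpow_le_three : (2:ℝ) ^ ((3:ℝ)/2) ≤ 3 := by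
  have h0 : (0:ℝ) ≤ (2:ℝ) ^ ((3:ℝ)/2) := Real.rpow_nonneg (by norm_num) _
  have h : ((2:ℝ) ^ ((3:ℝ)/2)) ^ (2:ℕ) = 8 := by
    rw [← Real.rpow_natCast ((2:ℝ) ^ ((3:ℝ)/2)) 2, ← Real.rpow_mul (by norm_num)]
    norm_num
  nlinarith [h, h0]

lemma sfm_norm_le {v : ℕ → ℝ} (h2 : |v 2| ≤ 1)
    (hodd : ∀ q : ℕ, q.Prime → q ≠ 2 → |v q| ≤ (((q:ℝ)) ^ ((3:ℝ)/2))⁻¹) (d : ℕ) :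
    ‖sfm v d‖ ≤ 3 * (((d:ℝ) ^ ((3:ℝ)/2))⁻¹) := by
  by_cases hd : Squarefree d
  · have hd0 : d ≠ 0 := hd.ne_zero
    set S := d.primeFactors with hS
    set T := S.erase 2 with hT
    set m := ∏ q ∈ T, q with hm
    have hmpos : 0 < m :=
      Finset.prod_pos fun q hq => (Nat.prime_of_mem_primeFactors (Finset.mem_of_mem_erase hq)).pos
    have hTnonneg : (0:ℝ) ≤ ∏ q ∈ T, |v q| := Finset.prod_nonneg fun q _ => abs_nonneg _
    have stepA : ‖sfm v d‖ ≤ ∏ q ∈ T, |v q| := by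
      rw [sfm, if_pos hd, Real.norm_eq_abs, Finset.abs_prod]
      by_cases h2S : 2 ∈ S
      · rw [← Finset.mul_prod_erase S (fun q => |v q|) h2S]
        calc |v 2| * ∏ q ∈ T, |v q| ≤ 1 * ∏ q ∈ T, |v q| :=
              mul_le_mul_of_nonneg_right h2 hTnonneg
          _ = _ := one_mul _
      · rw [hT, Finset.erase_eq_of_notMem h2S]
    have stepB : ∏ q ∈ T, |v q| ≤ ((m:ℝ) ^ ((3:ℝ)/2))⁻¹ := by
      calc ∏ q ∈ T, |v q| ≤ ∏ q ∈ T, (((q:ℝ)) ^ ((3:ℝ)/2))⁻¹ :=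
            Finset.prod_le_prod (fun q _ => abs_nonneg _) (fun q hq =>
              hodd q (Nat.prime_of_mem_primeFactors (Finset.mem_of_mem_erase hq))
                (Finset.ne_of_mem_erase hq))
        _ = ((m:ℝ) ^ ((3:ℝ)/2))⁻¹ := by
            rw [Finset.prod_inv_distrib, Real.finset_prod_rpow T _ (fun q _ => Nat.cast_nonneg q),
              hm, Nat.cast_prod]
    have stepC : d ≤ 2 * m := by
      have hprod : ∏ q ∈ S, q = d := Nat.prod_primeFactors_of_squarefree hd
      by_cases h2S : 2 ∈ S
      · rw [← hprod, ← Finset.mul_prod_erase S _ h2S]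
      · rw [← hprod, hm, hT, Finset.erase_eq_of_notMem h2S]; omega
    have ha : (0:ℝ) < (d:ℝ) ^ ((3:ℝ)/2) :=
      Real.rpow_pos_of_pos (by exact_mod_cast Nat.pos_of_ne_zero hd0) _
    have hb : (0:ℝ) < (m:ℝ) ^ ((3:ℝ)/2) := Real.rpow_pos_of_pos (by exact_mod_cast hmpos) _
    have hdm : (d:ℝ) ^ ((3:ℝ)/2) ≤ 3 * (m:ℝ) ^ ((3:ℝ)/2) := by
      calc (d:ℝ) ^ ((3:ℝ)/2) ≤ ((2*m : ℕ):ℝ) ^ ((3:ℝ)/2) :=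
            Real.rpow_le_rpow (Nat.cast_nonneg d) (by exact_mod_cast stepC) (by norm_num)
        _ = (2:ℝ) ^ ((3:ℝ)/2) * (m:ℝ) ^ ((3:ℝ)/2) := by
            push_cast; rw [Real.mul_rpow (by norm_num) (Nat.cast_nonneg m)]
        _ ≤ 3 * (m:ℝ) ^ ((3:ℝ)/2) := mul_le_mul_of_nonneg_right two_rpow_le_three hb.le
    have stepD : ((m:ℝ) ^ ((3:ℝ)/2))⁻¹ ≤ 3 * ((d:ℝ) ^ ((3:ℝ)/2))⁻¹ := by
      rw [← one_div, ← one_div ((d:ℝ) ^ _), mul_one_div, div_le_div_iff₀ hb ha]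
      linarith
    exact stepA.trans (stepB.trans stepD)
  · rw [sfm, if_neg hd, norm_zero]
    positivity

lemma sfm_summable {v : ℕ → ℝ} (h2 : |v 2| ≤ 1)
    (hodd : ∀ q : ℕ, q.Prime → q ≠ 2 → |v q| ≤ (((q:ℝ)) ^ ((3:ℝ)/2))⁻¹) :
    Summable (fun d => ‖sfm v d‖) :=
  Summable.of_nonneg_of_le (fun _ => norm_nonneg _) (sfm_norm_le h2 hodd)
    ((Real.summable_nat_rpow_inv.mpr (by norm_num)).mul_left 3)

lemma sfm_hasProd {v : ℕ → ℝ} (hsum : Summable (fun d => ‖sfm v d‖)) :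
    HasProd (fun p : Nat.Primes => 1 + v (p : ℕ)) (∑' d, sfm v d) := by
  have h := EulerProduct.eulerProduct_hasProd (f := sfm v) (sfm_one v)
    (fun {m n} hc => sfm_mul v hc) hsum (sfm_zero v)
  have he : (fun p : Nat.Primes => ∑' e : ℕ, sfm v ((p : ℕ) ^ e))
      = fun p : Nat.Primes => 1 + v (p : ℕ) := funext fun p => sfm_tsum_pow v p.prop
  rwa [he] at h

/-! ### The zeta(2) Euler product -/

noncomputable def zf : ℕ →*₀ ℝ where
  toFun := fun n => ((n : ℝ)⁻¹) ^ 2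
  map_zero' := by norm_num
  map_one' := by norm_num
  map_mul' := by intro m n; push_cast; rw [mul_inv]; ring

lemma hasProd_zeta2 :
    HasProd (fun p : Nat.Primes => (1 - ((p : ℕ) : ℝ)⁻¹ ^ 2)⁻¹) (π ^ 2 / 6) := by
  have hsum : Summable (fun n : ℕ => ‖zf n‖) := by
    have he : (fun n : ℕ => ‖zf n‖) = fun n : ℕ => (((n : ℝ)) ^ 2)⁻¹ := by
      funext n
      simp [zf, inv_pow]
    rw [he]
    exact Real.summable_nat_pow_inv.mpr one_lt_two
  have h := EulerProduct.eulerProduct_completely_multiplicative_hasProd (f := zf) hsum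
  have ht : ∑' n : ℕ, zf n = π ^ 2 / 6 := by
    rw [← hasSum_zeta_two.tsum_eq]
    apply tsum_congr
    intro n
    simp [zf, inv_pow, one_div]
  rw [ht] at h
  exact h

/-! ### The local values -/

noncomputable def vQ (q : ℕ) : ℝ :=
  if q = 2 then 1 else (q : ℝ) ^ 2 / ((q : ℝ) ^ 4 - 2 * (q : ℝ) ^ 2 - (q : ℝ) + 1)

noncomputable def vQ' (q : ℕ) : ℝ := vQ q / q

noncomputable def vA (q : ℕ) : ℝ := (q : ℝ) / (((q : ℝ) + 1) ^ 2 * ((q : ℝ) - 1))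

noncomputable def vC (q : ℕ) : ℝ :=
  if q = 2 then 0 else -((q : ℝ)⁻¹ ^ 2) - (q : ℝ)⁻¹ ^ 3 / (1 - (q : ℝ)⁻¹ ^ 2)

lemma sqrt_le_sub_one {x : ℝ} (hx : 3 ≤ x) : Real.sqrt x ≤ x - 1 := by
  have h : x ≤ (x - 1) ^ 2 := by nlinarith
  calc Real.sqrt x ≤ Real.sqrt ((x - 1) ^ 2) := Real.sqrt_le_sqrt h
    _ = x - 1 := Real.sqrt_sq (by linarith)

lemma rpow_three_halves {x : ℝ} (hx : 0 < x) : x ^ ((3:ℝ)/2) = x * Real.sqrt x := by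
  rw [show (3:ℝ)/2 = 1 + 1/2 by norm_num, Real.rpow_add hx, Real.rpow_one, Real.sqrt_eq_rpow]

lemma prime_three_le {q : ℕ} (hq : q.Prime) (h2 : q ≠ 2) : (3:ℝ) ≤ (q:ℝ) := by
  have h := hq.two_le
  have : 3 ≤ q := by omega
  exact_mod_cast this

lemma vQ_bound {q : ℕ} (hq : q.Prime) (h2 : q ≠ 2) : |vQ q| ≤ (((q:ℝ)) ^ ((3:ℝ)/2))⁻¹ := by
  have hx : (3:ℝ) ≤ (q:ℝ) := prime_three_le hq h2
  set x := (q:ℝ) with hxdef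
  have hx0 : 0 < x := by linarith
  have h9 : (9:ℝ) ≤ x ^ 2 := by nlinarith
  have hD : 0 < x ^ 4 - 2 * x ^ 2 - x + 1 := by
    nlinarith [mul_nonneg (sq_nonneg x) (by linarith : (0:ℝ) ≤ x ^ 2 - 9)]
  have hs0 : 0 ≤ Real.sqrt x := Real.sqrt_nonneg x
  have hss : Real.sqrt x * Real.sqrt x = x := Real.mul_self_sqrt hx0.le
  have hsle : Real.sqrt x ≤ x - 1 := sqrt_le_sub_one hx
  rw [vQ, if_neg h2, rpow_three_halves hx0, abs_of_nonneg (div_nonneg (sq_nonneg x) hD.le),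
    inv_eq_one_div, div_le_div_iff₀ hD (by nlinarith)]
  nlinarith [mul_le_mul_of_nonneg_left hsle (by nlinarith : (0:ℝ) ≤ x ^ 3)]

lemma vQ'_bound {q : ℕ} (hq : q.Prime) (h2 : q ≠ 2) : |vQ' q| ≤ (((q:ℝ)) ^ ((3:ℝ)/2))⁻¹ := by
  have hx : (3:ℝ) ≤ (q:ℝ) := prime_three_le hq h2
  have h : |vQ' q| ≤ |vQ q| := by
    rw [vQ', abs_div, abs_of_nonneg (by linarith : (0:ℝ) ≤ (q:ℝ))]
    refine div_le_self (abs_nonneg _) (by linarith) |>.trans_eq rfl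
  exact h.trans (vQ_bound hq h2)

lemma vA_bound {q : ℕ} (hq : q.Prime) (h2 : q ≠ 2) : |vA q| ≤ (((q:ℝ)) ^ ((3:ℝ)/2))⁻¹ := by
  have hx : (3:ℝ) ≤ (q:ℝ) := prime_three_le hq h2
  set x := (q:ℝ) with hxdef
  have hx0 : 0 < x := by linarith
  have hD : 0 < (x + 1) ^ 2 * (x - 1) := by nlinarith
  have hs0 : 0 ≤ Real.sqrt x := Real.sqrt_nonneg x
  have hss : Real.sqrt x * Real.sqrt x = x := Real.mul_self_sqrt hx0.le
  have hsle : Real.sqrt x ≤ x - 1 := sqrt_le_sub_one hx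
  rw [vA, rpow_three_halves hx0, abs_of_nonneg (div_nonneg hx0.le hD.le),
    inv_eq_one_div, div_le_div_iff₀ hD (by nlinarith)]
  nlinarith [mul_le_mul_of_nonneg_left hsle (by nlinarith : (0:ℝ) ≤ x ^ 2)]

lemma vC_bound {q : ℕ} (hq : q.Prime) (h2 : q ≠ 2) : |vC q| ≤ (((q:ℝ)) ^ ((3:ℝ)/2))⁻¹ := by
  have hx : (3:ℝ) ≤ (q:ℝ) := prime_three_le hq h2
  set x := (q:ℝ) with hxdef
  have hx0 : 0 < x := by linarith
  have hs0 : 0 ≤ Real.sqrt x := Real.sqrt_nonneg x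
  have hss : Real.sqrt x * Real.sqrt x = x := Real.mul_self_sqrt hx0.le
  have hsle : Real.sqrt x ≤ x - 1 := sqrt_le_sub_one hx
  have h1 : (0:ℝ) < 1 - x⁻¹ ^ 2 := by
    rw [inv_pow]
    have : (x ^ 2)⁻¹ < 1 := by
      rw [inv_lt_one_iff₀]; right; nlinarith
    linarith
  have hval : vC q = -(x⁻¹ ^ 2 + x⁻¹ ^ 3 / (1 - x⁻¹ ^ 2)) := by
    rw [vC, if_neg h2]; ring
  have hnn : 0 ≤ x⁻¹ ^ 2 + x⁻¹ ^ 3 / (1 - x⁻¹ ^ 2) := by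
    have h3 : (0:ℝ) ≤ x⁻¹ ^ 3 := by positivity
    have := div_nonneg h3 h1.le
    positivity
  rw [hval, abs_neg, abs_of_nonneg hnn]
  have hrw : x⁻¹ ^ 2 + x⁻¹ ^ 3 / (1 - x⁻¹ ^ 2) = (x ^ 2 + x - 1) / (x ^ 2 * (x ^ 2 - 1)) := by
    have hx2 : x ^ 2 - 1 ≠ 0 := by nlinarith
    field_simp
    ring
  have h9 : (9:ℝ) ≤ x ^ 2 := by nlinarith
  rw [hrw, rpow_three_halves hx0, inv_eq_one_div,
    div_le_div_iff₀ (mul_pos (by positivity) (by nlinarith)) (by nlinarith)]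
  nlinarith [mul_le_mul_of_nonneg_left hsle (by nlinarith : (0:ℝ) ≤ x ^ 2 + x - 1)]

lemma vQ_two : vQ 2 = 1 := if_pos rfl
lemma vC_two : vC 2 = 0 := if_pos rfl

/-! ### Identification of `murmurQ` -/

lemma murmurQ_eq : murmurQ = sfm vQ := by
  funext d
  rw [murmurQ, sfm]
  split_ifs with h
  · by_cases h2 : 2 ∈ d.primeFactors
    · rw [← Finset.mul_prod_erase _ _ h2, vQ_two, one_mul]
      exact (Finset.prod_congr rfl fun q hq => by
        rw [vQ, if_neg (Finset.ne_of_mem_erase hq)]).symm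
    · rw [Finset.erase_eq_of_notMem h2]
      exact (Finset.prod_congr rfl fun q hq => by
        rw [vQ, if_neg (fun he => h2 (by rw [← he]; exact hq))]).symm
  · rfl

lemma murmurQ_div_eq (d : ℕ) : murmurQ d / d = sfm vQ' d := by
  rw [murmurQ_eq, sfm, sfm]
  split_ifs with h
  · have : ∏ q ∈ d.primeFactors, vQ' q
        = (∏ q ∈ d.primeFactors, vQ q) / ∏ q ∈ d.primeFactors, (q:ℝ) := by
      rw [← Finset.prod_div_distrib]; rfl
    rw [this, ← Nat.cast_prod, Nat.prod_primeFactors_of_squarefree h]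
  · rw [zero_div]

/-! ### Pointwise local identities -/

lemma denom_facts {x : ℝ} (hx : 3 ≤ x) :
    x ≠ 0 ∧ (1 - x⁻¹ ^ 2) ≠ 0 ∧ (x ^ 4 - 2 * x ^ 2 - x + 1) ≠ 0
      ∧ ((x + 1) ^ 2 * (x - 1)) ≠ 0 := by
  have hx0 : (0:ℝ) < x := by linarith
  have h1 : (0:ℝ) < 1 - x⁻¹ ^ 2 := by
    rw [inv_pow]
    have : (x ^ 2)⁻¹ < 1 := by rw [inv_lt_one_iff₀]; right; nlinarith
    linarith
  have h9 : (9:ℝ) ≤ x ^ 2 := by nlinarith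
  refine ⟨hx0.ne', h1.ne', ?_, by nlinarith⟩
  nlinarith [mul_nonneg (sq_nonneg x) (by linarith : (0:ℝ) ≤ x ^ 2 - 9)]

lemma keyA {x : ℝ} (hx : 3 ≤ x) :
    (1 - x⁻¹ ^ 2)⁻¹ * (1 + (-(x⁻¹ ^ 2) - x⁻¹ ^ 3 / (1 - x⁻¹ ^ 2)))
      * (1 + x ^ 2 / (x ^ 4 - 2 * x ^ 2 - x + 1))
    = 1 + x / ((x + 1) ^ 2 * (x - 1)) := by
  obtain ⟨h0, h1, h2, h3⟩ := denom_facts hx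
  have h4 : x ^ 2 - 1 ≠ 0 := by nlinarith
  have h5 : x - 1 ≠ 0 := by nlinarith
  have e1 : 1 - x⁻¹ ^ 2 = (x ^ 2 - 1) / x ^ 2 := by field_simp
  have h2' : x * (x * (x ^ 2 - 2) - 1) + 1 ≠ 0 := by convert h2 using 1; ring
  rw [e1]
  field_simp
  ring

lemma keyB {x : ℝ} (hx : 3 ≤ x) :
    (1 - x⁻¹ ^ 2)⁻¹ * (1 + (-(x⁻¹ ^ 2) - x⁻¹ ^ 3 / (1 - x⁻¹ ^ 2)))
      * (1 + x ^ 2 / (x ^ 4 - 2 * x ^ 2 - x + 1) / x) = 1 := by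
  obtain ⟨h0, h1, h2, h3⟩ := denom_facts hx
  have h4 : x ^ 2 - 1 ≠ 0 := by nlinarith
  have e1 : 1 - x⁻¹ ^ 2 = (x ^ 2 - 1) / x ^ 2 := by field_simp
  have h2' : x * (x * (x ^ 2 - 2) - 1) + 1 ≠ 0 := by convert h2 using 1; ring
  rw [e1]
  field_simp
  ring

def ptwo : Nat.Primes := ⟨2, Nat.prime_two⟩

lemma point1 (p : Nat.Primes) :
    (1 - ((p : ℕ) : ℝ)⁻¹ ^ 2)⁻¹ * (1 + vC (p : ℕ)) * (1 + vQ (p : ℕ))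
      = (1 + vA (p : ℕ)) * (if (p : ℕ) = 2 then (24/11 : ℝ) else 1) := by
  by_cases h : (p : ℕ) = 2
  · rw [if_pos h, h, vC_two, vQ_two, vA]
    norm_num
  · rw [if_neg h, mul_one, vC, if_neg h, vQ, if_neg h, vA]
    exact keyA (prime_three_le p.prop h)

lemma point2 (p : Nat.Primes) :
    (1 - ((p : ℕ) : ℝ)⁻¹ ^ 2)⁻¹ * (1 + vC (p : ℕ)) * (1 + vQ' (p : ℕ))
      = (if (p : ℕ) = 2 then (2 : ℝ) else 1) := by
  by_cases h : (p : ℕ) = 2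
  · rw [if_pos h, h, vC_two, vQ', vQ_two]
    norm_num
  · rw [if_neg h, vC, if_neg h, vQ', vQ, if_neg h]
    exact keyB (prime_three_le p.prop h)

lemma hasProd_ite_two (c : ℝ) :
    HasProd (fun p : Nat.Primes => if (p : ℕ) = 2 then c else 1) c := by
  have he : (fun p : Nat.Primes => if (p : ℕ) = 2 then c else 1)
      = fun p : Nat.Primes => if p = ptwo then c else 1 := by
    funext p
    exact if_congr ⟨fun h => Subtype.ext h, fun h => by rw [h]; rfl⟩ rfl rfl
  rw [he]
  exact hasProd_ite_eq ptwo c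

/-! ### Main theorem -/

/-- The Euler product identities `(ζ(2)·c̄/A)·∑_d Q(d) = 8/11` and
`ζ(2)·c̄·∑_d Q(d)/d = 2/3`, with `ζ(2) = π²/6`. -/
theorem euler_product_identities :
    ((π ^ 2 / 6) * murmurCbar / murmurA) * (∑' d : ℕ, murmurQ d) = 8 / 11
    ∧ (π ^ 2 / 6) * murmurCbar * (∑' d : ℕ, murmurQ d / d) = 2 / 3 := by
  -- Euler products
  have hZ := hasProd_zeta2
  have hC : HasProd (fun p : Nat.Primes => 1 + vC (p : ℕ)) (∑' d, sfm vC d) :=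
    sfm_hasProd (v := vC) (sfm_summable (v := vC) (by rw [vC_two]; norm_num [abs_le]) (fun q hq h2 => vC_bound hq h2))
  have hS : HasProd (fun p : Nat.Primes => 1 + vQ (p : ℕ)) (∑' d, sfm vQ d) :=
    sfm_hasProd (v := vQ) (sfm_summable (v := vQ) (by rw [vQ_two]; norm_num [abs_le]) (fun q hq h2 => vQ_bound hq h2))
  have hS' : HasProd (fun p : Nat.Primes => 1 + vQ' (p : ℕ)) (∑' d, sfm vQ' d) :=
    sfm_hasProd (v := vQ') (sfm_summable (v := vQ') (by rw [vQ', vQ_two]; norm_num [abs_le]) (fun q hq h2 => vQ'_bound hq h2))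
  have sumA : Summable (fun d => ‖sfm vA d‖) :=
    sfm_summable (v := vA) (by rw [vA]; norm_num [abs_le]) (fun q hq h2 => vA_bound hq h2)
  have hA : HasProd (fun p : Nat.Primes => 1 + vA (p : ℕ)) (∑' d, sfm vA d) :=
    sfm_hasProd (v := vA) sumA
  set tC := ∑' d, sfm vC d
  set tS := ∑' d, sfm vQ d
  set tS' := ∑' d, sfm vQ' d
  set tA := ∑' d, sfm vA d
  -- murmurA = tA
  have hmA : murmurA = tA := by
    rw [murmurA]
    exact hA.tprod_eq
  -- murmurCbar = (1/3) * tC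
  have hmC : murmurCbar = (1/3) * tC := by
    rw [murmurCbar]
    congr 1
    have h1 : (∏' ℓ : {q : Nat.Primes // (q : ℕ) ≠ 2},
        (1 - ((ℓ : Nat.Primes) : ℝ)⁻¹ ^ 2
          - ((ℓ : Nat.Primes) : ℝ)⁻¹ ^ 3 / (1 - ((ℓ : Nat.Primes) : ℝ)⁻¹ ^ 2)))
        = ∏' p : Nat.Primes, Set.mulIndicator {q : Nat.Primes | (q : ℕ) ≠ 2}
            (fun p : Nat.Primes => 1 - (p : ℝ)⁻¹ ^ 2 - (p : ℝ)⁻¹ ^ 3 / (1 - (p : ℝ)⁻¹ ^ 2)) p :=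
      tprod_subtype {q : Nat.Primes | (q : ℕ) ≠ 2}
        (fun p : Nat.Primes => 1 - (p : ℝ)⁻¹ ^ 2 - (p : ℝ)⁻¹ ^ 3 / (1 - (p : ℝ)⁻¹ ^ 2))
    rw [h1]
    have h2 : Set.mulIndicator {q : Nat.Primes | (q : ℕ) ≠ 2}
        (fun p : Nat.Primes => 1 - (p : ℝ)⁻¹ ^ 2 - (p : ℝ)⁻¹ ^ 3 / (1 - (p : ℝ)⁻¹ ^ 2))
        = fun p : Nat.Primes => 1 + vC (p : ℕ) := by
      funext p
      by_cases h : (p : ℕ) = 2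
      · rw [Set.mulIndicator_of_notMem (by simp [h]), vC, if_pos h]
        norm_num
      · rw [Set.mulIndicator_of_mem (by simp [h]), vC, if_neg h]
        show (1 : ℝ) - ((p : ℕ) : ℝ)⁻¹ ^ 2 - _ = _
        ring
    rw [h2]
    exact hC.tprod_eq
  -- sums identified
  have hsum1 : ∑' d : ℕ, murmurQ d = tS := by rw [murmurQ_eq]
  have hsum2 : ∑' d : ℕ, murmurQ d / (d : ℝ) = tS' := tsum_congr murmurQ_div_eq
  -- combined HasProds
  have hprod1 : HasProd (fun p : Nat.Primes =>
      (1 - ((p : ℕ) : ℝ)⁻¹ ^ 2)⁻¹ * (1 + vC (p : ℕ)) * (1 + vQ (p : ℕ)))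
      ((π ^ 2 / 6) * tC * tS) := (hZ.mul hC).mul hS
  have hprod2 : HasProd (fun p : Nat.Primes =>
      (1 - ((p : ℕ) : ℝ)⁻¹ ^ 2)⁻¹ * (1 + vC (p : ℕ)) * (1 + vQ' (p : ℕ)))
      ((π ^ 2 / 6) * tC * tS') := (hZ.mul hC).mul hS'
  have hrhs1 : HasProd (fun p : Nat.Primes =>
      (1 - ((p : ℕ) : ℝ)⁻¹ ^ 2)⁻¹ * (1 + vC (p : ℕ)) * (1 + vQ (p : ℕ)))
      (tA * (24/11)) := by
    have := hA.mul (hasProd_ite_two (24/11))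
    rwa [show (fun p : Nat.Primes => (1 + vA (p : ℕ)) * (if (p : ℕ) = 2 then (24/11 : ℝ) else 1))
      = fun p : Nat.Primes =>
        (1 - ((p : ℕ) : ℝ)⁻¹ ^ 2)⁻¹ * (1 + vC (p : ℕ)) * (1 + vQ (p : ℕ)) from
      funext fun p => (point1 p).symm] at this
  have hrhs2 : HasProd (fun p : Nat.Primes =>
      (1 - ((p : ℕ) : ℝ)⁻¹ ^ 2)⁻¹ * (1 + vC (p : ℕ)) * (1 + vQ' (p : ℕ))) 2 := by
    have := hasProd_ite_two 2
    rwa [show (fun p : Nat.Primes => if (p : ℕ) = 2 then (2:ℝ) else 1)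
      = fun p : Nat.Primes =>
        (1 - ((p : ℕ) : ℝ)⁻¹ ^ 2)⁻¹ * (1 + vC (p : ℕ)) * (1 + vQ' (p : ℕ)) from
      funext fun p => (point2 p).symm] at this
  have heq1 : (π ^ 2 / 6) * tC * tS = tA * (24/11) := hprod1.unique hrhs1
  have heq2 : (π ^ 2 / 6) * tC * tS' = 2 := hprod2.unique hrhs2
  have htA : 1 ≤ tA := by
    have hnn : ∀ j : ℕ, j ≠ 1 → 0 ≤ sfm vA j := by
      intro j _
      rw [sfm]
      split_ifs with h
      · refine Finset.prod_nonneg fun q hq => ?_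
        have h2 : (2:ℝ) ≤ (q : ℝ) := by exact_mod_cast (Nat.prime_of_mem_primeFactors hq).two_le
        rw [vA]
        apply div_nonneg (by linarith)
        nlinarith
      · exact le_refl 0
    have hle := Summable.le_tsum sumA.of_norm 1 hnn
    rwa [sfm_one] at hle
  constructor
  · rw [hsum1, hmA, hmC, div_mul_eq_mul_div, div_eq_iff (by linarith : tA ≠ 0)]
    linear_combination (1/3 : ℝ) * heq1
  · rw [hsum2, hmC]
    linear_combination (1/3 : ℝ) * heq2
end
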